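/- Let (a_j)_{j∈ℕ} be a sequence of nonnegative real numbers and C₀ > 0 a constant such that for every R ≥ 0 the set {j ∈ ℕ : a_j ≤ R} is finite with cardinality at most C₀(1 + R²). Then there exists C > 0 (depending only on C₀) such that for every ε ∈ (0,1), the series ∑_{j∈ℕ} (1 + ε a_j)^{−3} converges and ∑_{j∈ℕ} (1 + ε a_j)^{−3} ≤ C ε^{−2}. -/

import Mathlib

open Real Filter Topology

/-- Telescoping sum for sequences tending to zero. -/
lemma hasSum_telescope_aux (g : ℕ → ℝ) (hg : Tendsto g atTop (𝓝 0))
    (hnn : ∀ n, g (n + 1) ≤ g n) : HasSum (fun n => g n - g (n + 1)) (g 0) := by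
  rw [hasSum_iff_tendsto_nat_of_nonneg (fun i => sub_nonneg.2 (hnn i))]
  simp only [Finset.sum_range_sub' g]
  simpa using tendsto_const_nhds.sub hg

/-- The telescoping weights. -/
noncomputable def cw (k : ℕ) : ℝ := ((k : ℝ) + 1)⁻¹ ^ 3 - ((k : ℝ) + 2)⁻¹ ^ 3

lemma cw_nonneg (k : ℕ) : 0 ≤ cw k := by
  have h : ((k : ℝ) + 2)⁻¹ ≤ ((k : ℝ) + 1)⁻¹ :=
    inv_anti₀ (by positivity) (by linarith)
  have h2 := pow_le_pow_left₀ (by positivity) h 3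
  unfold cw; linarith

lemma hasSum_g3 (m : ℕ) : HasSum (fun n : ℕ => cw (m + n)) (((m : ℝ) + 1)⁻¹ ^ 3) := by
  have h0 : Tendsto (fun n : ℕ => (((m + n : ℕ) : ℝ) + 1)⁻¹ ^ 3) atTop (𝓝 0) := by
    have h1 : Tendsto (fun n : ℕ => (((m + n : ℕ) : ℝ) + 1)⁻¹) atTop (𝓝 0) := by
      have h := (tendsto_one_div_add_atTop_nhds_zero_nat (𝕜 := ℝ)).comp (Filter.tendsto_add_atTop_nat m)
      have heq : (fun n : ℕ => (((m + n : ℕ) : ℝ) + 1)⁻¹) =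
          ((fun n : ℕ => 1 / ((n : ℝ) + 1)) ∘ fun a => a + m) := by
        funext n
        simp only [Function.comp, one_div, Nat.add_comm m n]
      rw [heq]
      exact h
    have := h1.pow 3
    simpa using this
  have h := hasSum_telescope_aux (fun n => (((m + n : ℕ) : ℝ) + 1)⁻¹ ^ 3) h0 ?_
  · have heq : (fun n : ℕ => cw (m + n)) =
        (fun n : ℕ => (((m + n : ℕ) : ℝ) + 1)⁻¹ ^ 3 - (((m + (n + 1) : ℕ) : ℝ) + 1)⁻¹ ^ 3) := by
      funext n; unfold cw; push_cast; ring_nf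
    rw [heq]
    simpa using h
  · intro n
    refine pow_le_pow_left₀ (by positivity) (inv_anti₀ (by positivity) ?_) 3
    push_cast; linarith

lemma hasSum_cw : HasSum cw 1 := by
  have h := hasSum_g3 0
  simp only [Nat.zero_add] at h
  simpa using h

lemma hasSum_g1 :
    HasSum (fun n : ℕ => ((n : ℝ) + 1)⁻¹ - ((n : ℝ) + 2)⁻¹) 1 := by
  have h := hasSum_telescope_aux (fun n : ℕ => ((n : ℝ) + 1)⁻¹) ?_ ?_
  · have heq : (fun n : ℕ => ((n : ℝ) + 1)⁻¹ - ((n : ℝ) + 2)⁻¹) =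
        (fun n : ℕ => ((n : ℝ) + 1)⁻¹ - (((n + 1 : ℕ) : ℝ) + 1)⁻¹) := by
      funext n; push_cast; ring_nf
    rw [heq]
    simpa using h
  · simpa [one_div] using tendsto_one_div_add_atTop_nhds_zero_nat (𝕜 := ℝ)
  · intro n
    refine inv_anti₀ (by positivity) ?_
    push_cast; linarith

lemma cw_le (k : ℕ) : cw k ≤ 3 * (((k : ℝ) + 1) ^ 4)⁻¹ := by
  unfold cw
  set u : ℝ := (k : ℝ) + 1 with hu
  have hu1 : 1 ≤ u := by rw [hu]; linarith [Nat.cast_nonneg (α := ℝ) k]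
  have hup : 0 < u := by linarith
  have h2 : (0:ℝ) < u + 1 := by linarith
  have h3 : (k : ℝ) + 2 = u + 1 := by rw [hu]; ring
  rw [h3]
  have e1 : u⁻¹ ^ 3 - (u + 1)⁻¹ ^ 3 = ((u + 1) ^ 3 - u ^ 3) / (u ^ 3 * (u + 1) ^ 3) := by
    field_simp
  have e2 : 3 * (u ^ 4)⁻¹ = 3 / u ^ 4 := by ring
  rw [e1, e2, div_le_div_iff₀ (by positivity) (by positivity)]
  nlinarith [sq_nonneg u, pow_pos hup 3, pow_pos h2 3, sq_nonneg (u - 1)]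

/-- Pointwise majorization by a telescoping series. -/
lemma key_pointwise (x : ℝ) (hx : 0 ≤ x) :
    (1 + x) ^ (-3 : ℝ) ≤ ∑' k : ℕ, (if x ≤ (k : ℝ) + 1 then cw k else 0) := by
  have hpos : (0:ℝ) < 1 + x := by linarith
  have hlhs : (1 + x) ^ (-3 : ℝ) = ((1 + x) ^ 3)⁻¹ := by
    rw [show (-3:ℝ) = -((3:ℕ):ℝ) by norm_num, Real.rpow_neg hpos.le, Real.rpow_natCast]
  set F : ℕ → ℝ := fun k => if x ≤ (k : ℝ) + 1 then cw k else 0 with hF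
  have hFnn : ∀ k, 0 ≤ F k := by
    intro k; simp only [hF]; split
    · exact cw_nonneg k
    · exact le_rfl
  have hFle : ∀ k, F k ≤ cw k := by
    intro k; simp only [hF]; split
    · exact le_rfl
    · exact cw_nonneg k
  have hFsum : Summable F := Summable.of_nonneg_of_le hFnn hFle hasSum_cw.summable
  set m : ℕ := ⌊x⌋₊ with hm
  have hshift : ∀ k : ℕ, F (k + m) = cw (k + m) := by
    intro k
    have h1 : x < (m : ℝ) + 1 := Nat.lt_floor_add_one x
    have h2 : x ≤ ((k + m : ℕ) : ℝ) + 1 := by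
      push_cast
      have : (0:ℝ) ≤ (k : ℝ) := Nat.cast_nonneg k
      linarith
    show (if x ≤ ((k + m : ℕ) : ℝ) + 1 then cw (k + m) else 0) = cw (k + m)
    rw [if_pos h2]
  have htail : ∑' k : ℕ, F (k + m) = ((m : ℝ) + 1)⁻¹ ^ 3 := by
    rw [← (hasSum_g3 m).tsum_eq]
    apply tsum_congr
    intro n
    rw [hshift n, add_comm]
  have hsplit := Summable.sum_add_tsum_nat_add m hFsum
  have hrange : 0 ≤ ∑ i ∈ Finset.range m, F i :=
    Finset.sum_nonneg fun i _ => hFnn i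
  have hge : ((m : ℝ) + 1)⁻¹ ^ 3 ≤ ∑' k, F k := by
    rw [← hsplit, htail]; linarith
  refine le_trans ?_ hge
  rw [hlhs, ← inv_pow]
  refine pow_le_pow_left₀ (by positivity) (inv_anti₀ (by positivity) ?_) 3
  have := Nat.floor_le hx
  rw [hm]; linarith

theorem sum_inv_cube_bound
    (a : ℕ → ℝ) (ha : ∀ j, 0 ≤ a j) (C₀ : ℝ) (hC₀ : 0 < C₀)
    (hcount : ∀ R : ℝ, 0 ≤ R → {j : ℕ | a j ≤ R}.Finite ∧
      ({j : ℕ | a j ≤ R}.ncard : ℝ) ≤ C₀ * (1 + R ^ 2)) :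
    ∃ C : ℝ, 0 < C ∧ ∀ ε : ℝ, ε ∈ Set.Ioo (0 : ℝ) 1 →
      Summable (fun j : ℕ => (1 + ε * a j) ^ (-3 : ℝ)) ∧
      ∑' j : ℕ, (1 + ε * a j) ^ (-3 : ℝ) ≤ C * ε ^ (-2 : ℝ) := by
  refine ⟨12 * C₀, by positivity, fun ε hε => ?_⟩
  obtain ⟨hε0, hε1⟩ := hε
  have hεinv : ε ^ (-2 : ℝ) = (ε ^ 2)⁻¹ := by
    rw [show (-2:ℝ) = -((2:ℕ):ℝ) by norm_num, Real.rpow_neg hε0.le, Real.rpow_natCast]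
  have hfnn : ∀ j : ℕ, 0 ≤ (1 + ε * a j) ^ (-3 : ℝ) := fun j =>
    Real.rpow_nonneg (by nlinarith [ha j]) _
  have hbound : ∀ s : Finset ℕ,
      ∑ j ∈ s, (1 + ε * a j) ^ (-3 : ℝ) ≤ 12 * C₀ * ε ^ (-2 : ℝ) := by
    intro s
    set F : ℕ → ℕ → ℝ := fun j k => if ε * a j ≤ (k : ℝ) + 1 then cw k else 0 with hFdef
    have hFsum : ∀ j, Summable (F j) := by
      intro j
      apply Summable.of_nonneg_of_le (fun k => ?_) (fun k => ?_) hasSum_cw.summable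
      · simp only [hFdef]; split
        · exact cw_nonneg k
        · exact le_rfl
      · simp only [hFdef]; split
        · exact le_rfl
        · exact cw_nonneg k
    have step1 : ∑ j ∈ s, (1 + ε * a j) ^ (-3 : ℝ) ≤ ∑ j ∈ s, ∑' k, F j k := by
      apply Finset.sum_le_sum
      intro j _
      exact key_pointwise (ε * a j) (mul_nonneg hε0.le (ha j))
    have step2 : ∑ j ∈ s, ∑' k, F j k = ∑' k, ∑ j ∈ s, F j k :=
      (Summable.tsum_finsetSum fun j _ => hFsum j).symm
    have hkbound : ∀ k : ℕ, ∑ j ∈ s, F j k ≤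
        (12 * C₀ * ε ^ (-2 : ℝ)) * (((k : ℝ) + 1)⁻¹ - ((k : ℝ) + 2)⁻¹) := by
      intro k
      set u : ℝ := (k : ℝ) + 1 with hu
      have hu1 : (1:ℝ) ≤ u := by rw [hu]; linarith [Nat.cast_nonneg (α := ℝ) k]
      have hup : (0:ℝ) < u := by linarith
      set R : ℝ := u / ε with hR
      have hR0 : 0 ≤ R := by positivity
      obtain ⟨hfin, hcard⟩ := hcount R hR0
      have hsum_eq : ∑ j ∈ s, F j k =
          ((s.filter (fun j => ε * a j ≤ (k : ℝ) + 1)).card : ℝ) * cw k := by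
        simp only [hFdef]
        rw [← Finset.sum_filter, Finset.sum_const, nsmul_eq_mul]
      have hcardle : ((s.filter (fun j => ε * a j ≤ (k : ℝ) + 1)).card : ℝ) ≤
          C₀ * (1 + R ^ 2) := by
        refine le_trans ?_ hcard
        have hsub : (s.filter (fun j => ε * a j ≤ (k : ℝ) + 1)) ⊆ hfin.toFinset := by
          intro j hj
          simp only [Set.Finite.mem_toFinset, Set.mem_setOf_eq]
          have hthis : a j * ε ≤ (k : ℝ) + 1 := by
            rw [mul_comm]; exact (Finset.mem_filter.mp hj).2
          rw [hR, le_div_iff₀ hε0, hu]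
          exact hthis
        have hc := Finset.card_le_card hsub
        rw [Set.ncard_eq_toFinset_card _ hfin]
        exact_mod_cast hc
      have hcw := cw_le k
      have hcwnn := cw_nonneg k
      have hsumle : ∑ j ∈ s, F j k ≤ C₀ * (1 + R ^ 2) * cw k := by
        rw [hsum_eq]
        apply mul_le_mul_of_nonneg_right hcardle hcwnn
      refine hsumle.trans ?_
      rw [hεinv]
      have hdid : ((k : ℝ) + 1)⁻¹ - ((k : ℝ) + 2)⁻¹ = (u * (u + 1))⁻¹ := by
        rw [← hu, show (k : ℝ) + 2 = u + 1 by rw [hu]; ring]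
        field_simp
        ring
      rw [hdid]
      have hR2 : R ^ 2 = u ^ 2 / ε ^ 2 := by rw [hR]; ring
      have h1R : 1 + R ^ 2 ≤ 2 * (u ^ 2 / ε ^ 2) := by
        rw [hR2]
        have h1 : (1:ℝ) ≤ u ^ 2 / ε ^ 2 := by
          rw [le_div_iff₀ (by positivity)]
          nlinarith
        linarith
      have step : C₀ * (1 + R ^ 2) * cw k ≤ C₀ * (2 * (u ^ 2 / ε ^ 2)) * (3 * (u ^ 4)⁻¹) := by
        apply mul_le_mul ?_ ?_ hcwnn ?_
        · exact mul_le_mul_of_nonneg_left h1R hC₀.le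
        · rw [hu]; exact hcw
        · positivity
      refine step.trans ?_
      have hA : C₀ * (2 * (u ^ 2 / ε ^ 2)) * (3 * (u ^ 4)⁻¹) = 6 * C₀ / (ε ^ 2 * u ^ 2) := by
        field_simp; ring
      have hB : 12 * C₀ * (ε ^ 2)⁻¹ * (u * (u + 1))⁻¹ = 12 * C₀ / (ε ^ 2 * (u * (u + 1))) := by
        field_simp
      rw [hA, hB, div_le_div_iff₀ (by positivity) (by positivity)]
      nlinarith [mul_nonneg (mul_nonneg (mul_nonneg (by linarith : (0:ℝ) ≤ 6 * C₀)
        (pow_pos hε0 2).le) hup.le) (by linarith : (0:ℝ) ≤ u - 1)]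
    have hmaj : Summable (fun k : ℕ =>
        (12 * C₀ * ε ^ (-2 : ℝ)) * (((k : ℝ) + 1)⁻¹ - ((k : ℝ) + 2)⁻¹)) :=
      (hasSum_g1.mul_left _).summable
    have hsummLHS : Summable (fun k => ∑ j ∈ s, F j k) :=
      summable_sum fun j _ => hFsum j
    calc ∑ j ∈ s, (1 + ε * a j) ^ (-3 : ℝ)
        ≤ ∑ j ∈ s, ∑' k, F j k := step1
      _ = ∑' k, ∑ j ∈ s, F j k := step2
      _ ≤ ∑' k : ℕ, (12 * C₀ * ε ^ (-2 : ℝ)) * (((k : ℝ) + 1)⁻¹ - ((k : ℝ) + 2)⁻¹) :=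
          Summable.tsum_le_tsum hkbound hsummLHS hmaj
      _ = 12 * C₀ * ε ^ (-2 : ℝ) := by
          rw [(hasSum_g1.mul_left (12 * C₀ * ε ^ (-2 : ℝ))).tsum_eq, mul_one]
  have hsummf : Summable (fun j : ℕ => (1 + ε * a j) ^ (-3 : ℝ)) :=
    summable_of_sum_le (fun j => hfnn j) hbound
  exact ⟨hsummf, Summable.tsum_le_of_sum_le hsummf hbound⟩
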